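/- Let $n \geq 1$ and $0 \leq k \leq n$ be integers, and let $\mathcal{A}$ be a set of $k+1$ linearly independent polynomials in $\mathbb{R}[X]_{\leq n}$ whose greatest common divisor is $1$ (equivalently, the ideal they generate is all of $\mathbb{R}[X]$). Then the real span of all polynomials $X^j Q$ with $Q \in \mathcal{A}$ and $0 \leq j \leq 2n - k - \deg Q$ equals $\mathbb{R}[X]_{\leq 2n-k}$. -/

import Mathlib

open Polynomial


lemma divByMonic_add' (a b q : ℝ[X]) (hq : q.Monic) :
    (a + b) /ₘ q = a /ₘ q + b /ₘ q := by
  refine (div_modByMonic_unique (a /ₘ q + b /ₘ q) (a %ₘ q + b %ₘ q) hq ⟨?_, ?_⟩).1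
  · have ha := modByMonic_add_div a q
    have hb := modByMonic_add_div b q
    ring_nf
    linear_combination ha + hb
  · exact (degree_add_le _ _).trans_lt
      (max_lt (degree_modByMonic_lt _ hq) (degree_modByMonic_lt _ hq))

lemma divByMonic_smul' (c : ℝ) (a q : ℝ[X]) (hq : q.Monic) :
    (c • a) /ₘ q = c • (a /ₘ q) := by
  refine (div_modByMonic_unique (c • (a /ₘ q)) (c • (a %ₘ q)) hq ⟨?_, ?_⟩).1
  · have ha := modByMonic_add_div a q
    rw [mul_smul_comm, ← smul_add, ha]
  · exact (degree_smul_le _ _).trans_lt (degree_modByMonic_lt _ hq)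

theorem core_lemma (n k m : ℕ) (hm2 : m + k = 2 * n)
    (A : Finset (Polynomial ℝ)) (hcard : A.card = k + 1)
    (hdeg : ∀ Q ∈ A, Q.natDegree ≤ n)
    (hind : LinearIndependent ℝ (fun q : {x // x ∈ A} => (q : Polynomial ℝ)))
    (hgcd : Ideal.span (A : Set (Polynomial ℝ)) = ⊤)
    (L : ℝ[X]) (hL : L.degree ≤ (m : WithBot ℕ))
    (hann : ∀ Q ∈ A, ∀ t, Q.natDegree ≤ t → t ≤ m → (Q * L).coeff t = 0) :
    L = 0 := by
  classical
  by_contra hL0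
  -- elements of A are nonzero
  have hAne : ∀ Q ∈ A, Q ≠ (0 : ℝ[X]) := by
    intro Q hQ
    exact hind.ne_zero ⟨Q, hQ⟩
  -- the set of "annihilators"
  set Pset : Set ℝ[X] :=
    {F | F ≠ 0 ∧ ∀ t, F.natDegree ≤ t → t ≤ m → (F * L).coeff t = 0} with hPset
  have hA0 : ∃ Q, Q ∈ A := by
    rcases Finset.card_pos.mp (by omega : 0 < A.card) with ⟨Q, hQ⟩
    exact ⟨Q, hQ⟩
  obtain ⟨Q₀, hQ₀⟩ := hA0
  have hQ₀P : Q₀ ∈ Pset := ⟨hAne Q₀ hQ₀, hann Q₀ hQ₀⟩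
  -- minimal degree of an annihilator
  set S : Set ℕ := {d | ∃ F ∈ Pset, F.natDegree = d} with hS
  have hSne : S.Nonempty := ⟨Q₀.natDegree, Q₀, hQ₀P, rfl⟩
  set c := sInf S with hc
  obtain ⟨F₀, hF₀P, hF₀d⟩ : ∃ F ∈ Pset, F.natDegree = c := Nat.sInf_mem hSne
  have hmin : ∀ G ∈ Pset, c ≤ G.natDegree := fun G hG => Nat.sInf_le ⟨G, hG, rfl⟩
  have hcn : c ≤ n := (hmin Q₀ hQ₀P).trans (hdeg Q₀ hQ₀)
  -- case c = 0 : L = 0 directly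
  rcases Nat.eq_zero_or_pos c with hc0 | hc1
  · obtain ⟨hF₀ne, hF₀w⟩ := hF₀P
    apply hL0
    ext t
    rcases le_or_gt t m with ht | ht
    · have h1 : (F₀ * L).coeff t = 0 := hF₀w t (by omega) ht
      have h2 : F₀ = C (F₀.coeff 0) := eq_C_of_natDegree_eq_zero (by omega)
      rw [h2, coeff_C_mul] at h1
      have h3 : F₀.coeff 0 ≠ 0 := by
        intro h
        exact hF₀ne (by rw [h2, h, map_zero])
      simpa [coeff_zero] using (mul_eq_zero.mp h1).resolve_left h3
    · simp only [coeff_zero]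
      exact coeff_eq_zero_of_degree_lt (lt_of_le_of_lt hL (by exact_mod_cast ht))
  -- now c ≥ 1
  -- monic minimal annihilator F
  have hF₀ne := hF₀P.1
  set F : ℝ[X] := F₀ * C (F₀.leadingCoeff)⁻¹ with hFdef
  have hFmonic : F.Monic := monic_mul_leadingCoeff_inv hF₀ne
  have hFne : F ≠ 0 := hFmonic.ne_zero
  have hFdeg : F.natDegree = c := by
    have := degree_mul_leadingCoeff_inv F₀ hF₀ne
    rw [← hF₀d]
    exact natDegree_eq_of_degree_eq this
  have hFP : F ∈ Pset := by
    refine ⟨hFne, fun t ht1 ht2 => ?_⟩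
    have : F * L = C (F₀.leadingCoeff)⁻¹ * (F₀ * L) := by ring
    rw [this, coeff_C_mul, hF₀P.2 t (by rw [hFdeg] at ht1; omega) ht2, mul_zero]

  -- ## decomposition machinery
  have hXN : (X ^ (m + 1) : ℝ[X]).Monic := monic_X_pow _
  have hdecomp : ∀ p : ℝ[X], p = X ^ (m + 1) * (p /ₘ X ^ (m + 1)) + p %ₘ X ^ (m + 1) := by
    intro p
    have h := modByMonic_add_div p (X ^ (m + 1))
    linear_combination -h
  have hcoeff_mod : ∀ p : ℝ[X], ∀ t, t ≤ m → (p %ₘ X ^ (m + 1)).coeff t = p.coeff t := by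
    intro p t ht
    conv_rhs => rw [hdecomp p]
    rw [coeff_add, mul_comm, coeff_mul_X_pow']
    simp only [if_neg (by omega : ¬ (m + 1 ≤ t)), zero_add]
  have hPdeg : ∀ (Q : ℝ[X]) (d : ℕ),
      (∀ t, d ≤ t → t ≤ m → (Q * L).coeff t = 0) →
      ((Q * L) %ₘ X ^ (m + 1)).degree < (d : WithBot ℕ) := by
    intro Q d hw
    rw [degree_lt_iff_coeff_zero]
    intro t ht
    rcases le_or_gt t m with h | h
    · rw [hcoeff_mod _ t h]; exact hw t ht h
    · apply coeff_eq_zero_of_degree_lt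
      refine lt_of_lt_of_le (degree_modByMonic_lt _ hXN) ?_
      rw [degree_X_pow]
      exact_mod_cast Nat.succ_le_of_lt h
  have hcross : ∀ Q : ℝ[X],
      Q * ((F * L) %ₘ X ^ (m + 1)) - F * ((Q * L) %ₘ X ^ (m + 1)) =
        X ^ (m + 1) * (F * ((Q * L) /ₘ X ^ (m + 1)) - Q * ((F * L) /ₘ X ^ (m + 1))) := by
    intro Q
    have e1 := hdecomp (F * L)
    have e2 := hdecomp (Q * L)
    linear_combination F * e2 - Q * e1
  have hsplit : ∀ a w : ℝ[X], a = X ^ (m + 1) * w →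
      a.degree < ((m + 1 : ℕ) : WithBot ℕ) → w = 0 := by
    intro a w he hd
    by_contra hw
    rw [he, degree_mul, degree_X_pow] at hd
    have h0 : (0 : WithBot ℕ) ≤ w.degree := zero_le_degree_iff.mpr hw
    have h1 : ((m + 1 : ℕ) : WithBot ℕ) ≤ ((m + 1 : ℕ) : WithBot ℕ) + w.degree :=
      le_add_of_nonneg_right h0
    exact absurd (lt_of_le_of_lt h1 hd) (lt_irrefl _)
  have hPFdeg : ((F * L) %ₘ X ^ (m + 1)).degree < (c : WithBot ℕ) :=
    hPdeg F c (fun t h1 h2 => hFP.2 t (by omega) h2)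
  -- ## descent lemma
  have hdesc : ∀ Q : ℝ[X], Q ≠ 0 →
      Q * ((F * L) %ₘ X ^ (m + 1)) = F * ((Q * L) %ₘ X ^ (m + 1)) →
      Q * ((F * L) /ₘ X ^ (m + 1)) = F * ((Q * L) /ₘ X ^ (m + 1)) →
      F ∣ Q := by
    intro Q hQne hp hr
    set G := gcd F Q with hG
    have hGF : G ∣ F := gcd_dvd_left F Q
    have hGQ : G ∣ Q := gcd_dvd_right F Q
    have hGne : G ≠ 0 := fun h => hFne (zero_dvd_iff.mp (h ▸ hGF))
    set f := F / G with hfdef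
    set q := Q / G with hqdef
    have hf : G * f = F := EuclideanDomain.mul_div_cancel' hGne hGF
    have hq : G * q = Q := EuclideanDomain.mul_div_cancel' hGne hGQ
    have hco : IsCoprime f q := isCoprime_div_gcd_div_gcd hQne
    have hfne : f ≠ 0 := by
      intro h
      apply hFne
      rw [← hf, h, mul_zero]
    have hp' : q * ((F * L) %ₘ X ^ (m + 1)) = f * ((Q * L) %ₘ X ^ (m + 1)) :=
      mul_left_cancel₀ hGne (by rw [← mul_assoc, ← mul_assoc, hq, hf]; exact hp)
    have hr' : q * ((F * L) /ₘ X ^ (m + 1)) = f * ((Q * L) /ₘ X ^ (m + 1)) :=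
      mul_left_cancel₀ hGne (by rw [← mul_assoc, ← mul_assoc, hq, hf]; exact hr)
    obtain ⟨U, hU⟩ : f ∣ (F * L) %ₘ X ^ (m + 1) := hco.dvd_of_dvd_mul_left ⟨_, hp'⟩
    obtain ⟨V, hV⟩ : f ∣ (F * L) /ₘ X ^ (m + 1) := hco.dvd_of_dvd_mul_left ⟨_, hr'⟩
    have hGL : G * L = X ^ (m + 1) * V + U := by
      apply mul_left_cancel₀ hfne
      have e1 := hdecomp (F * L)
      calc f * (G * L) = F * L := by rw [← hf]; ring
        _ = X ^ (m + 1) * ((F * L) /ₘ X ^ (m + 1)) + (F * L) %ₘ X ^ (m + 1) := e1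
        _ = f * (X ^ (m + 1) * V + U) := by rw [hU, hV]; ring
    have hndG : G.natDegree + f.natDegree = c := by
      rw [← hFdeg, ← hf, natDegree_mul hGne hfne]
    have hGP : G ∈ Pset := by
      refine ⟨hGne, fun t ht1 ht2 => ?_⟩
      rw [hGL, coeff_add]
      have h1 : (X ^ (m + 1) * V).coeff t = 0 := by
        rw [mul_comm, coeff_mul_X_pow']
        simp only [if_neg (by omega : ¬ (m + 1 ≤ t))]
      have h2 : U.coeff t = 0 := by
        rcases eq_or_ne U 0 with h | h
        · simp [h]
        · apply coeff_eq_zero_of_natDegree_lt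
          have hPFne : (F * L) %ₘ X ^ (m + 1) ≠ 0 := by
            rw [hU]; exact mul_ne_zero hfne h
          have hdPF : ((F * L) %ₘ X ^ (m + 1)).natDegree < c :=
            (natDegree_lt_iff_degree_lt hPFne).mpr hPFdeg
          have hnd : f.natDegree + U.natDegree < c := by
            rw [← natDegree_mul hfne h, ← hU]; exact hdPF
          omega
      rw [h1, h2, add_zero]
    have hminG : c ≤ G.natDegree := hmin G hGP
    have hfd : f.natDegree = 0 := by omega
    have hfu : IsUnit f := by
      rw [eq_C_of_natDegree_eq_zero hfd]
      refine isUnit_C.mpr (isUnit_iff_ne_zero.mpr ?_)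
      intro h
      apply hfne
      rw [eq_C_of_natDegree_eq_zero hfd, h, map_zero]
    obtain ⟨v, hv⟩ := hfu.exists_right_inv
    have hFG : F ∣ G := ⟨v, by rw [← hf, mul_assoc, hv, mul_one]⟩
    exact dvd_trans hFG hGQ
  -- helper for degree bounds of products
  have hmul_lt : ∀ (a b : ℝ[X]) (da db : ℕ), a.degree ≤ (da : WithBot ℕ) →
      b.degree < (db : WithBot ℕ) → (a * b).degree < ((da + db : ℕ) : WithBot ℕ) := by
    intro a b da db ha hb
    rcases eq_or_ne (a * b) 0 with h | h
    · rw [h, degree_zero]; exact WithBot.bot_lt_coe _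
    · have ha0 : a ≠ 0 := fun h0 => h (by rw [h0, zero_mul])
      have hb0 : b ≠ 0 := fun h0 => h (by rw [h0, mul_zero])
      rw [degree_mul, degree_eq_natDegree ha0, degree_eq_natDegree hb0]
      have h1 : a.natDegree ≤ da := natDegree_le_iff_degree_le.mpr ha
      have h2 : b.natDegree < db := (natDegree_lt_iff_degree_lt hb0).mpr hb
      rw [← Nat.cast_add]
      exact_mod_cast (by omega : a.natDegree + b.natDegree < da + db)
  have hFdegle : F.degree ≤ (c : WithBot ℕ) := by
    rw [← hFdeg]; exact degree_le_natDegree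
  -- ## main case split
  rcases le_or_gt (c + n) (m + 1) with hcase | hcase
  · -- small c : every element of A is divisible by F
    have hdvd : ∀ Q ∈ A, F ∣ Q := by
      intro Q hQ
      have hPQ : ((Q * L) %ₘ X ^ (m + 1)).degree < (Q.natDegree : WithBot ℕ) :=
        hPdeg Q Q.natDegree (hann Q hQ)
      have hdQ : Q.degree ≤ (Q.natDegree : WithBot ℕ) := degree_le_natDegree
      have hdlt : (Q * ((F * L) %ₘ X ^ (m + 1)) - F * ((Q * L) %ₘ X ^ (m + 1))).degree
          < ((m + 1 : ℕ) : WithBot ℕ) := by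
        apply lt_of_le_of_lt (degree_sub_le _ _)
        apply max_lt
        · refine lt_of_lt_of_le (hmul_lt Q _ Q.natDegree c hdQ hPFdeg) ?_
          exact_mod_cast (by have := hdeg Q hQ; omega : Q.natDegree + c ≤ m + 1)
        · refine lt_of_lt_of_le (hmul_lt F _ c Q.natDegree hFdegle hPQ) ?_
          exact_mod_cast (by have := hdeg Q hQ; omega : c + Q.natDegree ≤ m + 1)
      have hw0 := hsplit _ _ (hcross Q) hdlt
      have hpp : Q * ((F * L) %ₘ X ^ (m + 1)) = F * ((Q * L) %ₘ X ^ (m + 1)) := by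
        have h := hcross Q
        rw [hw0, mul_zero, sub_eq_zero] at h
        exact h
      have hrr : Q * ((F * L) /ₘ X ^ (m + 1)) = F * ((Q * L) /ₘ X ^ (m + 1)) := by
        have h : F * ((Q * L) /ₘ X ^ (m + 1)) - Q * ((F * L) /ₘ X ^ (m + 1)) = 0 := hw0
        rw [sub_eq_zero] at h
        exact h.symm
      exact hdesc Q (hAne Q hQ) hpp hrr
    have hFone : F ∣ 1 := by
      have hle : Ideal.span (A : Set ℝ[X]) ≤ Ideal.span {F} := by
        rw [Ideal.span_le]
        intro Q hQ
        rw [SetLike.mem_coe, Ideal.mem_span_singleton]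
        exact hdvd Q hQ
      rw [hgcd] at hle
      exact Ideal.mem_span_singleton.mp (hle Submodule.mem_top)
    have : F.natDegree = 0 := natDegree_eq_zero_of_isUnit (isUnit_of_dvd_one hFone)
    omega
  · -- large c : dimension count
    set 𝒬 : Submodule ℝ ℝ[X] :=
      (Polynomial.degreeLE ℝ (n : WithBot ℕ)) ⊓
        (⨅ t ∈ Finset.Icc n m,
          LinearMap.ker ((lcoeff ℝ t).comp (LinearMap.mulRight ℝ L))) with h𝒬
    have hmem𝒬 : ∀ p : ℝ[X], p ∈ 𝒬 ↔
        (p.degree ≤ (n : WithBot ℕ) ∧ ∀ t, n ≤ t → t ≤ m → (p * L).coeff t = 0) := by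
      intro p
      simp only [h𝒬, Submodule.mem_inf, mem_degreeLE, Submodule.mem_iInf, LinearMap.mem_ker,
        LinearMap.coe_comp, Function.comp_apply, LinearMap.mulRight_apply, lcoeff_apply,
        Finset.mem_Icc]
      constructor
      · rintro ⟨h1, h2⟩
        exact ⟨h1, fun t ht1 ht2 => h2 t ⟨ht1, ht2⟩⟩
      · rintro ⟨h1, h2⟩
        exact ⟨h1, fun t ht => h2 t ht.1 ht.2⟩
    haveI hfdLT : ∀ d : ℕ, FiniteDimensional ℝ (Polynomial.degreeLT ℝ d) :=
      fun d => Module.Finite.equiv (Polynomial.degreeLTEquiv ℝ d).symm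
    haveI : FiniteDimensional ℝ 𝒬 := by
      apply Submodule.finiteDimensional_of_le (S₂ := Polynomial.degreeLT ℝ (n + 1))
      intro p hp
      rw [mem_degreeLT]
      refine lt_of_le_of_lt ((hmem𝒬 p).mp hp).1 ?_
      exact_mod_cast WithBot.coe_lt_coe.mpr (Nat.lt_succ_self n)
    -- lower bound on the dimension
    have hge : k + 1 ≤ Module.finrank ℝ 𝒬 := by
      have hv : ∀ q : {x // x ∈ A}, (q : ℝ[X]) ∈ 𝒬 := by
        rintro ⟨Q, hQ⟩
        rw [hmem𝒬]
        constructor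
        · refine degree_le_natDegree.trans ?_
          exact_mod_cast hdeg Q hQ
        · exact fun t ht1 ht2 => hann Q hQ t (le_trans (hdeg Q hQ) ht1) ht2
      have hvind : LinearIndependent ℝ (fun q : {x // x ∈ A} => (⟨(q : ℝ[X]), hv q⟩ : 𝒬)) := by
        apply LinearIndependent.of_comp (𝒬.subtype)
        exact hind
      have hcb := hvind.fintype_card_le_finrank
      rwa [Fintype.card_coe, hcard] at hcb
    -- the injective map for the upper bound
    set Φ₁ : 𝒬 →ₗ[ℝ] ℝ[X] :=
      { toFun := fun Q => (Q : ℝ[X]) /ₘ F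
        map_add' := fun a b => by
          simp only [Submodule.coe_add]
          exact divByMonic_add' _ _ _ hFmonic
        map_smul' := fun r a => by
          simp only [Submodule.coe_smul, RingHom.id_apply]
          exact divByMonic_smul' _ _ _ hFmonic } with hΦ₁
    set Φ₂ : 𝒬 →ₗ[ℝ] ℝ[X] :=
      { toFun := fun Q => F * (((Q : ℝ[X]) * L) /ₘ X ^ (m + 1)) -
          (Q : ℝ[X]) * ((F * L) /ₘ X ^ (m + 1))
        map_add' := fun a b => by
          simp only [Submodule.coe_add, add_mul]
          rw [divByMonic_add' _ _ _ hXN]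
          ring
        map_smul' := fun r a => by
          simp only [Submodule.coe_smul, RingHom.id_apply]
          rw [smul_mul_assoc, divByMonic_smul' _ _ _ hXN, mul_smul_comm, smul_mul_assoc,
            smul_sub] } with hΦ₂
    have hrange₁ : ∀ Q : 𝒬, Φ₁ Q ∈ Polynomial.degreeLT ℝ (n - c + 1) := by
      intro Q
      rw [mem_degreeLT]
      show ((Q : ℝ[X]) /ₘ F).degree < ((n - c + 1 : ℕ) : WithBot ℕ)
      rcases eq_or_ne ((Q : ℝ[X]) /ₘ F) 0 with h | h
      · rw [h, degree_zero]; exact WithBot.bot_lt_coe _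
      · rw [← natDegree_lt_iff_degree_lt h]
        have h1 : ((Q : ℝ[X]) /ₘ F).natDegree = (Q : ℝ[X]).natDegree - F.natDegree :=
          natDegree_divByMonic _ hFmonic
        have h2 : (Q : ℝ[X]).natDegree ≤ n :=
          natDegree_le_iff_degree_le.mpr ((hmem𝒬 _).mp Q.2).1
        omega
    have hrange₂ : ∀ Q : 𝒬, Φ₂ Q ∈ Polynomial.degreeLT ℝ (n + c - m - 1) := by
      intro Q
      rw [mem_degreeLT]
      show (F * (((Q : ℝ[X]) * L) /ₘ X ^ (m + 1)) -
          (Q : ℝ[X]) * ((F * L) /ₘ X ^ (m + 1))).degree < ((n + c - m - 1 : ℕ) : WithBot ℕ)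
      set w : ℝ[X] := F * (((Q : ℝ[X]) * L) /ₘ X ^ (m + 1)) -
          (Q : ℝ[X]) * ((F * L) /ₘ X ^ (m + 1)) with hw
      rcases eq_or_ne w 0 with h | h
      · rw [h, degree_zero]; exact WithBot.bot_lt_coe _
      · have he := hcross (Q : ℝ[X])
        rw [← hw] at he
        have hPQ : (((Q : ℝ[X]) * L) %ₘ X ^ (m + 1)).degree < (n : WithBot ℕ) :=
          hPdeg _ n (((hmem𝒬 _).mp Q.2).2)
        have hdQ : (Q : ℝ[X]).degree ≤ (n : WithBot ℕ) := ((hmem𝒬 _).mp Q.2).1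
        have hdlt : ((Q : ℝ[X]) * ((F * L) %ₘ X ^ (m + 1)) -
            F * (((Q : ℝ[X]) * L) %ₘ X ^ (m + 1))).degree < ((n + c : ℕ) : WithBot ℕ) := by
          apply lt_of_le_of_lt (degree_sub_le _ _)
          apply max_lt
          · exact hmul_lt _ _ n c hdQ hPFdeg
          · refine lt_of_lt_of_le (hmul_lt F _ c n hFdegle hPQ) ?_
            exact_mod_cast (by omega : c + n ≤ n + c)
        rw [he, degree_mul, degree_X_pow, degree_eq_natDegree h] at hdlt
        have hcast : ((m + 1 : ℕ) : WithBot ℕ) + (w.natDegree : WithBot ℕ)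
            = ((m + 1 + w.natDegree : ℕ) : WithBot ℕ) := by
          push_cast
          ring
        rw [hcast] at hdlt
        have hlt : m + 1 + w.natDegree < n + c := by exact_mod_cast hdlt
        rw [degree_eq_natDegree h]
        exact_mod_cast (by omega : w.natDegree < n + c - m - 1)
    set Φ : 𝒬 →ₗ[ℝ] (Polynomial.degreeLT ℝ (n - c + 1)) × (Polynomial.degreeLT ℝ (n + c - m - 1)) :=
      (Φ₁.codRestrict _ hrange₁).prod (Φ₂.codRestrict _ hrange₂) with hΦ
    have hΦinj : Function.Injective Φ := by
      rw [← LinearMap.ker_eq_bot, LinearMap.ker_eq_bot']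
      intro Q hQ0
      have h1 : Φ₁ Q = 0 := by
        have := congrArg (fun p => (p.1 : ℝ[X])) hQ0
        simpa [hΦ, LinearMap.prod_apply, LinearMap.codRestrict] using this
      have h2 : Φ₂ Q = 0 := by
        have := congrArg (fun p => (p.2 : ℝ[X])) hQ0
        simpa [hΦ, LinearMap.prod_apply, LinearMap.codRestrict] using this
      rcases eq_or_ne (Q : ℝ[X]) 0 with hq0 | hq0
      · exact Subtype.ext hq0
      · have hw : F * (((Q : ℝ[X]) * L) /ₘ X ^ (m + 1)) -
            (Q : ℝ[X]) * ((F * L) /ₘ X ^ (m + 1)) = 0 := h2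
        have hcrossQ := hcross (Q : ℝ[X])
        rw [hw, mul_zero, sub_eq_zero] at hcrossQ
        have hrr : (Q : ℝ[X]) * ((F * L) /ₘ X ^ (m + 1)) =
            F * (((Q : ℝ[X]) * L) /ₘ X ^ (m + 1)) := (sub_eq_zero.mp hw).symm
        have hdvdQ := hdesc _ hq0 hcrossQ hrr
        have hmod : (Q : ℝ[X]) %ₘ F = 0 := (modByMonic_eq_zero_iff_dvd hFmonic).mpr hdvdQ
        have hQeq := modByMonic_add_div (Q : ℝ[X]) F
        rw [hmod, zero_add] at hQeq
        have h1' : (Q : ℝ[X]) /ₘ F = 0 := h1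
        rw [h1', mul_zero] at hQeq
        exact absurd hQeq.symm hq0
    have hub : Module.finrank ℝ 𝒬 ≤ (n - c + 1) + (n + c - m - 1) := by
      have hle' := LinearMap.finrank_le_finrank_of_injective hΦinj
      rwa [Module.finrank_prod,
        (Polynomial.degreeLTEquiv ℝ (n - c + 1)).finrank_eq, Module.finrank_fin_fun,
        (Polynomial.degreeLTEquiv ℝ (n + c - m - 1)).finrank_eq, Module.finrank_fin_fun] at hle'
    omega


/-- If `𝒜` consists of `k+1` linearly independent polynomials of `ℝ[X]_{≤ n}`
generating the unit ideal, then the span of the `X^j Q` (`Q ∈ 𝒜`,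
`j ≤ 2n - k - deg Q`) is all of `ℝ[X]_{≤ 2n-k}`. -/
theorem span_eq_degreeLE (n k : ℕ) (hn : 1 ≤ n) (hk : k ≤ n)
    (A : Finset (Polynomial ℝ)) (hcard : A.card = k + 1)
    (hdeg : ∀ Q ∈ A, Q.natDegree ≤ n)
    (hind : LinearIndependent ℝ (fun q : {x // x ∈ A} => (q : Polynomial ℝ)))
    (hgcd : Ideal.span (A : Set (Polynomial ℝ)) = ⊤) :
    Submodule.span ℝ
        {R : Polynomial ℝ | ∃ Q ∈ A, ∃ j ≤ 2 * n - k - Q.natDegree,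
          R = Polynomial.X ^ j * Q} =
      Polynomial.degreeLE ℝ ((2 * n - k : ℕ) : WithBot ℕ) := by
  classical
  set m := 2 * n - k with hm
  have hm2 : m + k = 2 * n := by omega
  set Sset : Set ℝ[X] := {R | ∃ Q ∈ A, ∃ j ≤ m - Q.natDegree, R = X ^ j * Q} with hSset
  set V := Submodule.span ℝ Sset with hV
  show V = degreeLE ℝ (m : WithBot ℕ)
  have hsub : V ≤ Polynomial.degreeLE ℝ (m : WithBot ℕ) := by
    rw [hV, Submodule.span_le]
    rintro R ⟨Q, hQ, j, hj, rfl⟩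
    rw [SetLike.mem_coe, mem_degreeLE]
    have h1 : (X ^ j * Q).natDegree ≤ j + Q.natDegree := by
      refine natDegree_mul_le.trans ?_
      rw [natDegree_X_pow]
    have h2 : j + Q.natDegree ≤ m := by
      have := hdeg Q hQ
      omega
    exact degree_le_natDegree.trans (by exact_mod_cast h1.trans h2)
  by_contra hne
  have hlt : V < degreeLE ℝ (m : WithBot ℕ) := lt_of_le_of_ne hsub hne
  obtain ⟨w, hwW, hwV⟩ := SetLike.exists_of_lt hlt
  set π := V.mkQ with hπ
  have hπw : π w ≠ 0 := by
    intro h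
    rw [hπ, Submodule.mkQ_apply, Submodule.Quotient.mk_eq_zero] at h
    exact hwV h
  obtain ⟨φ, hφ⟩ : ∃ φ : Module.Dual ℝ (ℝ[X] ⧸ V), φ (π w) ≠ 0 := by
    by_contra h
    push_neg at h
    exact hπw ((Module.forall_dual_apply_eq_zero_iff ℝ (π w)).mp h)
  set f : ℝ[X] →ₗ[ℝ] ℝ := φ.comp π with hf
  have hfV : ∀ p ∈ V, f p = 0 := by
    intro p hp
    have hp0 : π p = 0 := by
      rw [hπ, Submodule.mkQ_apply, Submodule.Quotient.mk_eq_zero]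
      exact hp
    rw [hf, LinearMap.comp_apply, hp0, map_zero]
  set L : ℝ[X] := ∑ t ∈ Finset.range (m + 1), C (f (X ^ t)) * X ^ (m - t) with hLdef
  have hLdeg : L.degree ≤ (m : WithBot ℕ) := by
    refine (degree_sum_le _ _).trans ?_
    rw [Finset.sup_le_iff]
    intro t ht
    rw [C_mul_X_pow_eq_monomial]
    refine (degree_monomial_le _ _).trans ?_
    exact_mod_cast (by omega : m - t ≤ m)
  have hpair : ∀ P : ℝ[X], P.natDegree ≤ m → (P * L).coeff m = f P := by
    intro P hP
    rw [hLdef, Finset.mul_sum, finset_sum_coeff]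
    have hP' := as_sum_range' P (m + 1) (by omega : P.natDegree < m + 1)
    conv_rhs => rw [hP']
    rw [map_sum]
    apply Finset.sum_congr rfl
    intro t ht
    rw [Finset.mem_range] at ht
    have h1 : P * (C (f (X ^ t)) * X ^ (m - t)) = C (f (X ^ t)) * (P * X ^ (m - t)) := by
      ring
    rw [h1, coeff_C_mul, coeff_mul_X_pow', if_pos (by omega : m - t ≤ m),
      (by omega : m - (m - t) = t)]
    have h3 : (monomial t (P.coeff t) : ℝ[X]) = P.coeff t • (X ^ t) := by
      rw [← C_mul_X_pow_eq_monomial, smul_eq_C_mul]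
    rw [h3, map_smul, smul_eq_mul]
    ring
  have hwm : w.natDegree ≤ m := natDegree_le_iff_degree_le.mpr (mem_degreeLE.mp hwW)
  have hLne : L ≠ 0 := by
    intro h
    have h2 := hpair w hwm
    rw [h, mul_zero, coeff_zero] at h2
    exact hφ h2.symm
  have hann : ∀ Q ∈ A, ∀ t, Q.natDegree ≤ t → t ≤ m → (Q * L).coeff t = 0 := by
    intro Q hQ t ht1 ht2
    set j := m - t with hj
    have hmem : X ^ j * Q ∈ Sset := ⟨Q, hQ, j, by omega, rfl⟩
    have hf0 : f (X ^ j * Q) = 0 := hfV _ (Submodule.subset_span hmem)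
    have hd : (X ^ j * Q).natDegree ≤ m := by
      have h1 : (X ^ j * Q).natDegree ≤ j + Q.natDegree := by
        refine natDegree_mul_le.trans ?_
        rw [natDegree_X_pow]
      omega
    have h2 := hpair _ hd
    rw [hf0] at h2
    rw [mul_assoc, mul_comm (X ^ j) (Q * L), coeff_mul_X_pow', if_pos (by omega : j ≤ m),
      (by omega : m - j = t)] at h2
    exact h2
  exact hLne (core_lemma n k m hm2 A hcard hdeg hind hgcd L hLdeg hann)
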